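/- Let $\pi$ be a finite group with a homomorphism $w\colon\pi\to\{\pm 1\}$. Suppose there is $g\in\pi$ with $g^2=1$, $g\neq 1$, and $w(g)=-1$. If $\Gamma(\mathbbm{Z}\pi)$ contains $\mathbbm{Z}\pi/\mathbbm{Z}\pi(1-g)$ as a $\mathbbm{Z}\pi$-module direct summand, then $\Tors(\mathbbm{Z}^w\otimes_{\mathbbm{Z}\pi}\Gamma(\mathbbm{Z}\pi))\neq 0$; more precisely $\mathbbm{Z}^w\otimes_{\mathbbm{Z}\pi}(\mathbbm{Z}\pi/\mathbbm{Z}\pi(1-g))\cong\mathbbm{Z}/2$. -/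

import Mathlib

/-- The relations defining Whitehead's quadratic functor `Γ(A)`. -/
def GammaRel (A : Type*) [AddCommGroup A] : AddSubgroup (FreeAbelianGroup A) :=
  AddSubgroup.closure
    ({x | ∃ a : A, x = FreeAbelianGroup.of (-a) - FreeAbelianGroup.of a} ∪
     {x | ∃ a b c : A,
        x = FreeAbelianGroup.of (a + b + c) - FreeAbelianGroup.of (a + b)
            - FreeAbelianGroup.of (b + c) - FreeAbelianGroup.of (c + a)
            + FreeAbelianGroup.of a + FreeAbelianGroup.of b + FreeAbelianGroup.of c})

/-- Whitehead's quadratic functor `Γ(A)` of an abelian group `A`. -/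
def Gamma (A : Type*) [AddCommGroup A] : Type _ :=
  FreeAbelianGroup A ⧸ GammaRel A

instance (A : Type*) [AddCommGroup A] : AddCommGroup (Gamma A) :=
  QuotientAddGroup.Quotient.addCommGroup (GammaRel A)

/-- The universal quadratic map `v : A → Γ(A)`. -/
def Gamma.v {A : Type*} [AddCommGroup A] (a : A) : Gamma A :=
  QuotientAddGroup.mk (FreeAbelianGroup.of a)

/-- Functoriality of `Γ` in additive maps. -/
def Gamma.map {A B : Type*} [AddCommGroup A] [AddCommGroup B] (f : A →+ B) :
    Gamma A →+ Gamma B :=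
  QuotientAddGroup.map _ _
    (FreeAbelianGroup.lift fun a => FreeAbelianGroup.of (f a))
    (by
      refine (AddSubgroup.closure_le _).2 ?_
      rintro x (⟨a, rfl⟩ | ⟨a, b, c, rfl⟩) <;>
        refine AddSubgroup.mem_comap.2 ?_
      · have : (FreeAbelianGroup.lift fun a => FreeAbelianGroup.of (f a))
            (FreeAbelianGroup.of (-a) - FreeAbelianGroup.of a)
            = FreeAbelianGroup.of (-(f a)) - FreeAbelianGroup.of (f a) := by
          rw [map_sub, FreeAbelianGroup.lift_apply_of, FreeAbelianGroup.lift_apply_of, map_neg]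
        rw [this]
        exact AddSubgroup.subset_closure (Or.inl ⟨f a, rfl⟩)
      · have : (FreeAbelianGroup.lift fun a => FreeAbelianGroup.of (f a))
            (FreeAbelianGroup.of (a + b + c) - FreeAbelianGroup.of (a + b)
              - FreeAbelianGroup.of (b + c) - FreeAbelianGroup.of (c + a)
              + FreeAbelianGroup.of a + FreeAbelianGroup.of b + FreeAbelianGroup.of c)
            = FreeAbelianGroup.of (f a + f b + f c) - FreeAbelianGroup.of (f a + f b)
              - FreeAbelianGroup.of (f b + f c) - FreeAbelianGroup.of (f c + f a)
              + FreeAbelianGroup.of (f a) + FreeAbelianGroup.of (f b)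
              + FreeAbelianGroup.of (f c) := by
          simp only [map_sub, map_add, FreeAbelianGroup.lift_apply_of]
        rw [this]
        exact AddSubgroup.subset_closure (Or.inr ⟨f a, f b, f c, rfl⟩))

lemma Gamma.map_mk {A B : Type*} [AddCommGroup A] [AddCommGroup B] (f : A →+ B)
    (y : FreeAbelianGroup A) :
    Gamma.map f (QuotientAddGroup.mk y) =
      QuotientAddGroup.mk (FreeAbelianGroup.lift (fun a => FreeAbelianGroup.of (f a)) y) :=
  rfl

/-- The action of `π` on `Γ(ℤπ)` induced by functoriality of `Γ` from left
multiplication by group elements, as a representation of `π` over `ℤ`. -/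
noncomputable def gammaRep (π : Type*) [Group π] :
    Representation ℤ π (Gamma (MonoidAlgebra ℤ π)) where
  toFun g :=
    (Gamma.map (AddMonoidHom.mulLeft (MonoidAlgebra.single g 1))).toIntLinearMap
  map_one' := by
    ext x
    refine QuotientAddGroup.induction_on x ?_
    intro y
    show Gamma.map _ (QuotientAddGroup.mk y) = QuotientAddGroup.mk y
    rw [Gamma.map_mk]
    congr 1
    refine FreeAbelianGroup.induction_on y ?_ ?_ ?_ ?_
    · simp
    · intro a
      rw [FreeAbelianGroup.lift_apply_of]
      congr 1
      show MonoidAlgebra.single 1 1 * a = a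
      rw [← MonoidAlgebra.one_def, one_mul]
    · intro a ha
      rw [map_neg, ha]
    · intro a b ha hb
      rw [map_add, ha, hb]
  map_mul' := by
    intro g h
    ext x
    refine QuotientAddGroup.induction_on x ?_
    intro y
    show Gamma.map _ (QuotientAddGroup.mk y)
      = Gamma.map _ (Gamma.map _ (QuotientAddGroup.mk y))
    rw [Gamma.map_mk, Gamma.map_mk, Gamma.map_mk]
    congr 1
    refine FreeAbelianGroup.induction_on y ?_ ?_ ?_ ?_
    · simp
    · intro a
      rw [FreeAbelianGroup.lift_apply_of, FreeAbelianGroup.lift_apply_of, FreeAbelianGroup.lift_apply_of]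
      congr 1
      show MonoidAlgebra.single (g * h) 1 * a
        = MonoidAlgebra.single g 1 * (MonoidAlgebra.single h 1 * a)
      rw [← mul_assoc, MonoidAlgebra.single_mul_single, one_mul]
    · intro a ha
      simp only [map_neg, ha]
    · intro a b ha hb
      simp only [map_add, ha, hb]

/-- `Γ(ℤπ)` as a left module over the group ring `ℤπ`. -/
noncomputable abbrev GammaModule (π : Type*) [Group π] : Type _ :=
  (gammaRep π).asModule

open MonoidAlgebra TensorProduct

section
variable (π : Type*) [Group π] (w : π →* ℤˣ)

/-- The ring homomorphism `ℤπ → ℤ` induced by `w`. -/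
noncomputable def epsW : MonoidAlgebra ℤ π →+* ℤ :=
  ((MonoidAlgebra.lift ℤ ℤ π) ((Units.coeHom ℤ).comp w)).toRingHom

/-- `ℤ^w`: the abelian group `ℤ`, viewed as a module over the group ring `ℤπ`
(on either side) via `g · z = w(g) z`. -/
def Zw (π : Type*) [Group π] (w : π →* ℤˣ) : Type := ℤ

instance : AddCommGroup (Zw π w) := inferInstanceAs (AddCommGroup ℤ)

/-- `ℤ^w` as a left `ℤπ`-module. -/
noncomputable instance : Module (MonoidAlgebra ℤ π) (Zw π w) :=
  Module.compHom ℤ (epsW π w)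

/-- `ℤ^w` as a right `ℤπ`-module. -/
noncomputable instance : Module (MonoidAlgebra ℤ π)ᵐᵒᵖ (Zw π w) :=
  Module.compHom ℤ (RingHom.fromOpposite (epsW π w) (fun _ _ => mul_comm _ _))

/-- The identity identification of `ℤ^w` with `ℤ`. -/
def Zw.toInt (z : Zw π w) : ℤ := z

end

section
variable (R : Type*) [Ring R]
variable (C : Type*) [AddCommGroup C] [Module Rᵐᵒᵖ C]
variable (M : Type*) [AddCommGroup M] [Module R M]

/-- The subgroup of relations `(c·r) ⊗ m - c ⊗ (r·m)` defining the tensor product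
of a right `R`-module `C` and a left `R`-module `M` over `R`. -/
noncomputable def moduleTensorRel : AddSubgroup (C ⊗[ℤ] M) :=
  AddSubgroup.closure
    {x | ∃ (c : C) (r : R) (m : M),
      x = (MulOpposite.op r • c) ⊗ₜ[ℤ] m - c ⊗ₜ[ℤ] (r • m)}

/-- The tensor product `C ⊗_R M` of a right `R`-module `C` and a left `R`-module `M`
over a (possibly noncommutative) ring `R`, as an abelian group. -/
noncomputable def ModuleTensor : Type _ :=
  (C ⊗[ℤ] M) ⧸ moduleTensorRel R C M

noncomputable instance : AddCommGroup (ModuleTensor R C M) :=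
  QuotientAddGroup.Quotient.addCommGroup _

end

section Aux

variable {R : Type*} [Ring R]
variable {C : Type*} [AddCommGroup C] [Module Rᵐᵒᵖ C]
variable {M₁ M₂ : Type*} [AddCommGroup M₁] [Module R M₁] [AddCommGroup M₂] [Module R M₂]

/-- Functoriality of `ModuleTensor` in the right variable. -/
noncomputable def ModuleTensor.map (h : M₁ →ₗ[R] M₂) :
    ModuleTensor R C M₁ →+ ModuleTensor R C M₂ :=
  QuotientAddGroup.map _ _
    (LinearMap.lTensor (R := ℤ) C h.toAddMonoidHom.toIntLinearMap).toAddMonoidHom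
    (by
      refine (AddSubgroup.closure_le _).2 ?_
      rintro x ⟨c, r, m, rfl⟩
      refine AddSubgroup.mem_comap.2 ?_
      have : (LinearMap.lTensor (R := ℤ) C h.toAddMonoidHom.toIntLinearMap)
          ((MulOpposite.op r • c) ⊗ₜ[ℤ] m - c ⊗ₜ[ℤ] (r • m))
          = (MulOpposite.op r • c) ⊗ₜ[ℤ] (h m) - c ⊗ₜ[ℤ] (r • h m) := by
        rw [map_sub, LinearMap.lTensor_tmul, LinearMap.lTensor_tmul]
        simp only [LinearMap.coe_mk, AddHom.coe_mk, AddMonoidHom.coe_toIntLinearMap,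
          LinearMap.toAddMonoidHom_coe, map_smul]
      erw [this]
      exact AddSubgroup.subset_closure ⟨c, r, h m, rfl⟩)

lemma ModuleTensor.map_mk (h : M₁ →ₗ[R] M₂) (x : C ⊗[ℤ] M₁) :
    ModuleTensor.map (C := C) h (QuotientAddGroup.mk x) =
      QuotientAddGroup.mk ((LinearMap.lTensor (R := ℤ) C h.toAddMonoidHom.toIntLinearMap) x) :=
  rfl

end Aux

section Aux2
variable (π : Type) [Group π] (w : π →* ℤˣ) (g : π)

/-- Inclusion of `ℤ` into `ℤ^w`. -/
def Zw.ofInt (z : ℤ) : Zw π w := z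

/-- The quotient module `ℤπ / ℤπ(1-g)`. -/
noncomputable abbrev QuotMod : Type :=
  MonoidAlgebra ℤ π ⧸
    Submodule.span (MonoidAlgebra ℤ π) {1 - MonoidAlgebra.single g (1 : ℤ)}

/-- `ε` composed with reduction mod 2. -/
noncomputable def epsTwo : MonoidAlgebra ℤ π →+* ZMod 2 :=
  (Int.castRingHom (ZMod 2)).comp (epsW π w)

/-- `ε mod 2` descends to the quotient, as a semilinear map. -/
noncomputable def epsBar (hwg : w g = -1) : QuotMod π g →ₛₗ[epsTwo π w] ZMod 2 :=
  Submodule.liftQ _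
    { toFun := fun x => epsTwo π w x
      map_add' := fun x y => by simp
      map_smul' := fun r x => by simp [smul_eq_mul, map_mul] }
    (by
      rw [Submodule.span_le]
      rintro x hx
      rw [Set.mem_singleton_iff] at hx
      subst hx
      simp only [SetLike.mem_coe, LinearMap.mem_ker, LinearMap.coe_mk, AddHom.coe_mk, map_sub]
      have h1 : epsTwo π w 1 = 1 := map_one _
      have h2 : epsTwo π w (MonoidAlgebra.single g 1) = -1 := by
        simp [epsTwo, epsW, hwg]
      rw [h1, h2]
      decide)

lemma epsBar_mk (hwg : w g = -1) (r : MonoidAlgebra ℤ π) :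
    epsBar π w g hwg (Submodule.Quotient.mk r) = epsTwo π w r := rfl

/-- The additive map `ℤ^w ⊗_ℤ (ℤπ/ℤπ(1-g)) → ℤ/2`, `z ⊗ [r] ↦ z·ε(r) mod 2`. -/
noncomputable def phiAux (hwg : w g = -1) : Zw π w ⊗[ℤ] QuotMod π g →+ ZMod 2 :=
  (TensorProduct.lift
    { toFun := fun z =>
        (Zw.toInt π w z) • ((epsBar π w g hwg).toAddMonoidHom.toIntLinearMap)
      map_add' := fun x y => by
        have h : Zw.toInt π w (x + y) = Zw.toInt π w x + Zw.toInt π w y := rfl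
        simp only [h, add_smul]
      map_smul' := fun c z => by
        have h : Zw.toInt π w (c • z) = c * Zw.toInt π w z := rfl
        simp only [h, mul_smul, RingHom.id_apply] }).toAddMonoidHom

lemma phiAux_tmul (hwg : w g = -1) (z : Zw π w) (m : QuotMod π g) :
    phiAux π w g hwg (z ⊗ₜ[ℤ] m) = (Zw.toInt π w z) • epsBar π w g hwg m := rfl

lemma phiAux_rel (hwg : w g = -1) :
    moduleTensorRel (MonoidAlgebra ℤ π) (Zw π w) (QuotMod π g) ≤
      AddMonoidHom.ker (phiAux π w g hwg) := by
  refine (AddSubgroup.closure_le _).2 ?_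
  rintro x ⟨c, r, m, rfl⟩
  simp only [SetLike.mem_coe, AddMonoidHom.mem_ker, map_sub, phiAux_tmul]
  obtain ⟨m, rfl⟩ := Submodule.Quotient.mk_surjective _ m
  have hsm : (r • Submodule.Quotient.mk m : QuotMod π g) = Submodule.Quotient.mk (r • m) :=
    (Submodule.Quotient.mk_smul _ _ _).symm
  rw [hsm, epsBar_mk, epsBar_mk]
  have hop : Zw.toInt π w (MulOpposite.op r • c) = epsW π w r * Zw.toInt π w c := rfl
  rw [hop]
  have : epsTwo π w (r • m) = epsTwo π w r * epsTwo π w m := by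
    rw [smul_eq_mul, map_mul]
  rw [this]
  simp only [zsmul_eq_mul, epsTwo, RingHom.coe_comp, Function.comp_apply,
    Int.coe_castRingHom]
  push_cast
  ring

/-- The homomorphism `ℤ^w ⊗_{ℤπ} (ℤπ/ℤπ(1-g)) → ℤ/2`. -/
noncomputable def phiHom (hwg : w g = -1) :
    ModuleTensor (MonoidAlgebra ℤ π) (Zw π w) (QuotMod π g) →+ ZMod 2 :=
  QuotientAddGroup.lift _ (phiAux π w g hwg) (phiAux_rel π w g hwg)

/-- The generator `[1 ⊗ [1]]` of `ℤ^w ⊗_{ℤπ} (ℤπ/ℤπ(1-g))`. -/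
noncomputable def genMT : ModuleTensor (MonoidAlgebra ℤ π) (Zw π w) (QuotMod π g) :=
  QuotientAddGroup.mk (Zw.ofInt π w 1 ⊗ₜ[ℤ] (Submodule.Quotient.mk 1))

lemma smul_mk_tensor (z : ℤ) (c : Zw π w) (m : QuotMod π g) :
    (QuotientAddGroup.mk ((z • c) ⊗ₜ[ℤ] m) :
        ModuleTensor (MonoidAlgebra ℤ π) (Zw π w) (QuotMod π g))
      = z • QuotientAddGroup.mk (c ⊗ₜ[ℤ] m) := by
  have : (z • c) ⊗ₜ[ℤ] m = z • (c ⊗ₜ[ℤ] m) := by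
    rw [TensorProduct.smul_tmul']
  rw [this]
  rfl

lemma mk_one_tensor (hwg : w g = -1) (r : MonoidAlgebra ℤ π) :
    (QuotientAddGroup.mk (Zw.ofInt π w 1 ⊗ₜ[ℤ] (Submodule.Quotient.mk r)) :
        ModuleTensor (MonoidAlgebra ℤ π) (Zw π w) (QuotMod π g))
      = epsW π w r • genMT π w g := by
  have hrel : (MulOpposite.op r • Zw.ofInt π w 1) ⊗ₜ[ℤ] (Submodule.Quotient.mk 1 : QuotMod π g)
      - Zw.ofInt π w 1 ⊗ₜ[ℤ] (r • (Submodule.Quotient.mk 1 : QuotMod π g))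
      ∈ moduleTensorRel (MonoidAlgebra ℤ π) (Zw π w) (QuotMod π g) :=
    AddSubgroup.subset_closure ⟨_, r, _, rfl⟩
  have h1 : MulOpposite.op r • Zw.ofInt π w 1 = Zw.ofInt π w (epsW π w r) := by
    show epsW π w r * 1 = epsW π w r
    rw [mul_one]
  have h2 : (r • (Submodule.Quotient.mk 1 : QuotMod π g)) = Submodule.Quotient.mk r := by
    rw [← Submodule.Quotient.mk_smul, smul_eq_mul, mul_one]
  rw [h1, h2] at hrel
  have heq : (QuotientAddGroup.mk
        (Zw.ofInt π w (epsW π w r) ⊗ₜ[ℤ] (Submodule.Quotient.mk 1 : QuotMod π g)) :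
        ModuleTensor (MonoidAlgebra ℤ π) (Zw π w) (QuotMod π g))
      = QuotientAddGroup.mk (Zw.ofInt π w 1 ⊗ₜ[ℤ] Submodule.Quotient.mk r) :=
    QuotientAddGroup.eq_iff_sub_mem.2 hrel
  rw [← heq]
  have h3 : Zw.ofInt π w (epsW π w r) = (epsW π w r) • Zw.ofInt π w 1 := by
    show epsW π w r = epsW π w r * 1
    rw [mul_one]
  rw [h3, smul_mk_tensor]
  rfl

lemma two_smul_gen (hg2 : g ^ 2 = 1) (hwg : w g = -1) :
    (2 : ℤ) • genMT π w g = 0 := by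
  have := mk_one_tensor π w g hwg (MonoidAlgebra.single g 1)
  have hval : epsW π w (MonoidAlgebra.single g 1) = -1 := by simp [epsW, hwg]
  rw [hval] at this
  -- also compute directly: mk (1 ⊗ mk (single g 1)) = genMT (since mk (single g 1) = mk 1)
  have hmk : (Submodule.Quotient.mk (MonoidAlgebra.single g 1) : QuotMod π g)
      = Submodule.Quotient.mk 1 := by
    rw [Submodule.Quotient.eq]
    have hns : (MonoidAlgebra.single g (1:ℤ) : MonoidAlgebra ℤ π) - 1
        = -(1 - MonoidAlgebra.single g 1) := (neg_sub _ _).symm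
    rw [hns]
    exact Submodule.neg_mem _ (Submodule.subset_span (Set.mem_singleton _))
  rw [hmk] at this
  have : (genMT π w g : ModuleTensor (MonoidAlgebra ℤ π) (Zw π w) (QuotMod π g))
      = (-1 : ℤ) • genMT π w g := this
  have h2 : (2 : ℤ) • genMT π w g = genMT π w g + genMT π w g := two_zsmul _
  rw [h2]
  nth_rewrite 1 [this]
  simp

lemma phi_gen (hwg : w g = -1) : phiHom π w g hwg (genMT π w g) = 1 := by
  show phiAux π w g hwg (Zw.ofInt π w 1 ⊗ₜ[ℤ] (Submodule.Quotient.mk 1)) = 1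
  rw [phiAux_tmul, epsBar_mk]
  show (1 : ℤ) • epsTwo π w 1 = 1
  rw [map_one, one_smul]

/-- The inverse homomorphism `ℤ/2 → ℤ^w ⊗_{ℤπ} (ℤπ/ℤπ(1-g))`. -/
noncomputable def psiHom (hg2 : g ^ 2 = 1) (hwg : w g = -1) :
    ZMod 2 →+ ModuleTensor (MonoidAlgebra ℤ π) (Zw π w) (QuotMod π g) :=
  ZMod.lift 2 ⟨(zmultiplesHom _ (genMT π w g)), by
    show ((2 : ℕ) : ℤ) • genMT π w g = 0
    rw [Nat.cast_ofNat]
    exact two_smul_gen π w g hg2 hwg⟩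

lemma psi_intCast (hg2 : g ^ 2 = 1) (hwg : w g = -1) (n : ℤ) :
    psiHom π w g hg2 hwg ((n : ZMod 2)) = n • genMT π w g :=
  ZMod.lift_coe _ _ n

lemma psi_phi (hg2 : g ^ 2 = 1) (hwg : w g = -1)
    (x : ModuleTensor (MonoidAlgebra ℤ π) (Zw π w) (QuotMod π g)) :
    psiHom π w g hg2 hwg (phiHom π w g hwg x) = x := by
  refine QuotientAddGroup.induction_on x ?_
  intro y
  induction y using TensorProduct.induction_on with
  | zero =>
      show psiHom π w g hg2 hwg (phiHom π w g hwg 0) = 0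
      rw [map_zero, map_zero]
  | tmul z m =>
      obtain ⟨r, rfl⟩ := Submodule.Quotient.mk_surjective _ m
      have hz : z = (Zw.toInt π w z) • Zw.ofInt π w 1 := by
        show Zw.toInt π w z = Zw.toInt π w z * 1
        rw [mul_one]
      have hphi : phiHom π w g hwg (QuotientAddGroup.mk (z ⊗ₜ[ℤ] Submodule.Quotient.mk r))
          = ((Zw.toInt π w z * epsW π w r : ℤ) : ZMod 2) := by
        show phiAux π w g hwg (z ⊗ₜ[ℤ] Submodule.Quotient.mk r) = _
        rw [phiAux_tmul, epsBar_mk]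
        show (Zw.toInt π w z) • ((epsW π w r : ℤ) : ZMod 2) = _
        push_cast
        rw [zsmul_eq_mul]
      rw [hphi, psi_intCast π w g hg2 hwg]
      nth_rewrite 2 [hz]
      rw [smul_mk_tensor, mk_one_tensor π w g hwg r]
      exact mul_smul _ _ _
  | add a b ha hb =>
      have hab : (QuotientAddGroup.mk (a + b) :
          ModuleTensor (MonoidAlgebra ℤ π) (Zw π w) (QuotMod π g))
          = (QuotientAddGroup.mk a : ModuleTensor (MonoidAlgebra ℤ π) (Zw π w) (QuotMod π g))
            + (QuotientAddGroup.mk b : ModuleTensor (MonoidAlgebra ℤ π) (Zw π w) (QuotMod π g)) := rfl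
      rw [hab]
      exact (congrArg _ (map_add _ _ _)).trans ((map_add _ _ _).trans (congrArg₂ (· + ·) ha hb))

lemma phi_psi (hg2 : g ^ 2 = 1) (hwg : w g = -1) (x : ZMod 2) :
    phiHom π w g hwg (psiHom π w g hg2 hwg x) = x := by
  obtain ⟨n, rfl⟩ := ZMod.intCast_surjective x
  rw [psi_intCast π w g hg2 hwg, map_zsmul, phi_gen π w g hwg]
  rw [zsmul_eq_mul, mul_one]

section Aux3
variable {R : Type*} [Ring R]
variable {C : Type*} [AddCommGroup C] [Module Rᵐᵒᵖ C]
variable {M₁ M₂ M₃ : Type*} [AddCommGroup M₁] [Module R M₁] [AddCommGroup M₂] [Module R M₂]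
  [AddCommGroup M₃] [Module R M₃]

lemma ModuleTensor.map_map (h₁ : M₁ →ₗ[R] M₂) (h₂ : M₂ →ₗ[R] M₃)
    (x : ModuleTensor R C M₁) :
    ModuleTensor.map (C := C) h₂ (ModuleTensor.map (C := C) h₁ x)
      = ModuleTensor.map (C := C) (h₂ ∘ₗ h₁) x := by
  refine QuotientAddGroup.induction_on x ?_
  intro y
  rw [ModuleTensor.map_mk, ModuleTensor.map_mk, ModuleTensor.map_mk]
  congr 1
  have h : (h₂ ∘ₗ h₁).toAddMonoidHom.toIntLinearMap
      = h₂.toAddMonoidHom.toIntLinearMap ∘ₗ h₁.toAddMonoidHom.toIntLinearMap := rfl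
  rw [h, LinearMap.lTensor_comp]
  rfl

lemma ModuleTensor.map_id (x : ModuleTensor R C M₁) :
    ModuleTensor.map (C := C) (LinearMap.id (R := R) (M := M₁)) x = x := by
  refine QuotientAddGroup.induction_on x ?_
  intro y
  rw [ModuleTensor.map_mk]
  congr 1
  have h : (LinearMap.id (R := R) (M := M₁)).toAddMonoidHom.toIntLinearMap
      = LinearMap.id (R := ℤ) (M := M₁) := rfl
  rw [h, LinearMap.lTensor_id]
  rfl

end Aux3

end Aux2

/-- Let `π` be a finite group with a homomorphism `w : π → {±1}`.
Suppose there is `g ∈ π` with `g² = 1`, `g ≠ 1` and `w g = -1`.  If `Γ(ℤπ)` contains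
`ℤπ/ℤπ(1-g)` as a `ℤπ`-module direct summand, then the torsion subgroup of
`ℤ^w ⊗_{ℤπ} Γ(ℤπ)` is nonzero; more precisely
`ℤ^w ⊗_{ℤπ} (ℤπ/ℤπ(1-g)) ≅ ℤ/2`. -/
theorem torsion_nonzero_of_summand
    (π : Type) [Group π] [Fintype π] (w : π →* ℤˣ)
    (g : π) (hg2 : g ^ 2 = 1) (hg1 : g ≠ 1) (hwg : w g = -1)
    (hsummand :
      ∃ N P : Submodule (MonoidAlgebra ℤ π) (GammaModule π),
        IsCompl N P ∧
        Nonempty (N ≃ₗ[MonoidAlgebra ℤ π]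
          (MonoidAlgebra ℤ π ⧸
            Submodule.span (MonoidAlgebra ℤ π) {1 - MonoidAlgebra.single g (1 : ℤ)})) ) :
    Nonempty
      (ModuleTensor (MonoidAlgebra ℤ π) (Zw π w)
          (MonoidAlgebra ℤ π ⧸
            Submodule.span (MonoidAlgebra ℤ π) {1 - MonoidAlgebra.single g (1 : ℤ)})
        ≃+ ZMod 2) ∧
    AddCommGroup.torsion
        (ModuleTensor (MonoidAlgebra ℤ π) (Zw π w) (GammaModule π)) ≠ ⊥ := by
  obtain ⟨N, P, hcompl, ⟨e⟩⟩ := hsummand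
  constructor
  · exact ⟨{ toFun := phiHom π w g hwg
             invFun := psiHom π w g hg2 hwg
             left_inv := psi_phi π w g hg2 hwg
             right_inv := phi_psi π w g hg2 hwg
             map_add' := map_add _ }⟩
  · set f : GammaModule π →ₗ[MonoidAlgebra ℤ π] QuotMod π g :=
      (e : N →ₗ[MonoidAlgebra ℤ π] QuotMod π g) ∘ₗ N.linearProjOfIsCompl P hcompl with hf
    set s : QuotMod π g →ₗ[MonoidAlgebra ℤ π] GammaModule π :=
      N.subtype ∘ₗ (e.symm : QuotMod π g →ₗ[MonoidAlgebra ℤ π] N) with hs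
    have hfs : f ∘ₗ s = LinearMap.id := by
      apply LinearMap.ext
      intro y
      simp only [hf, hs, LinearMap.coe_comp, Function.comp_apply, LinearMap.id_apply,
        Submodule.coe_subtype, LinearEquiv.coe_coe]
      rw [show N.linearProjOfIsCompl P hcompl (e.symm y : GammaModule π) = e.symm y from
        Submodule.linearProjOfIsCompl_apply_left hcompl (e.symm y)]
      exact e.apply_symm_apply y
    set t : ModuleTensor (MonoidAlgebra ℤ π) (Zw π w) (GammaModule π) :=
      ModuleTensor.map (C := Zw π w) s (genMT π w g) with ht
    have hretr : ModuleTensor.map (C := Zw π w) f t = genMT π w g := by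
      rw [ht, ModuleTensor.map_map, hfs, ModuleTensor.map_id]
    have htne : t ≠ 0 := by
      intro h0
      have hgen0 : genMT π w g = 0 := by rw [← hretr, h0, map_zero]
      have h1 := phi_gen π w g hwg
      rw [hgen0, map_zero] at h1
      exact zero_ne_one h1
    have ht2 : (2 : ℕ) • t = 0 := by
      have : (2 : ℕ) • t = (2 : ℤ) • t := by
        rw [← natCast_zsmul]; norm_num
      rw [this, ht, ← map_zsmul, two_smul_gen π w g hg2 hwg, map_zero]
    have htmem : t ∈ AddCommGroup.torsion
        (ModuleTensor (MonoidAlgebra ℤ π) (Zw π w) (GammaModule π)) := by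
      refine (isOfFinAddOrder_iff_nsmul_eq_zero).2 ⟨2, by norm_num, ht2⟩
    intro hbot
    rw [hbot] at htmem
    exact htne (AddSubgroup.mem_bot.1 htmem)
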